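/- arXiv:math/0511536 — 2 statements merged into one kernel-verified Lean document; each statement's English description precedes it below -/
import Mathlib

section
/- There exists a finite constant ρ ≥ 1, independent of Λ, such that for all integers υ ≥ 1 and nonnegative integers b_1, …, b_υ with Σ_{i=1}^υ b_i > υ: λ_{⌈Σ_{i=1}^υ b_i / υ⌉} ≤ Σ_{i=1}^υ λ_{b_i} ≤ υ^{1+ρ} λ_{⌈Σ_{i=1}^υ b_i / υ⌉}. -/
open MeasureTheory Finset Filter

/-- `lamBK μ b k` is `λ_{b,k} = ∫_{[0,1]} x^{k-2} (1-x)^{b-k} dΛ(x)`. -/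
noncomputable def lamBK (μ : Measure ℝ) (b k : ℕ) : ℝ :=
  ∫ x in Set.Icc (0:ℝ) 1, x ^ (k - 2) * (1 - x) ^ (b - k) ∂μ

/-- `lamB μ b` is `λ_b = Σ_{k=2}^b C(b,k) λ_{b,k}`. -/
noncomputable def lamB (μ : Measure ℝ) (b : ℕ) : ℝ :=
  ∑ k ∈ Finset.Icc 2 b, (b.choose k : ℝ) * lamBK μ b k

/-- `gamB μ b` is `γ_b = Σ_{k=2}^b C(b,k) (k-1) λ_{b,k}`. -/
noncomputable def gamB (μ : Measure ℝ) (b : ℕ) : ℝ :=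
  ∑ k ∈ Finset.Icc 2 b, (b.choose k : ℝ) * ((k : ℝ) - 1) * lamBK μ b k

noncomputable def gfun (b : ℕ) (x : ℝ) : ℝ :=
  ∑ k ∈ Finset.Icc 2 b, (b.choose k : ℝ) * (x ^ (k - 2) * (1 - x) ^ (b - k))

lemma gfun_nonneg {b : ℕ} {x : ℝ} (hx : x ∈ Set.Icc (0:ℝ) 1) : 0 ≤ gfun b x := by
  obtain ⟨h0, h1⟩ := hx
  refine Finset.sum_nonneg fun k _ => ?_
  have h1' : (0:ℝ) ≤ 1 - x := by linarith
  positivity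

lemma gfun_continuous (b : ℕ) : Continuous (gfun b) := by
  unfold gfun
  exact continuous_finset_sum _ fun k _ => by fun_prop

lemma sq_mul_gfun {b : ℕ} (hb : 2 ≤ b) (x : ℝ) :
    x ^ 2 * gfun b x = 1 - (1 - x) ^ b - (b : ℝ) * x * (1 - x) ^ (b - 1) := by
  have hset : Finset.range (b + 1) = insert 0 (insert 1 (Finset.Icc 2 b)) := by
    ext k; simp only [Finset.mem_range, Finset.mem_insert, Finset.mem_Icc]; omega
  have hbin := add_pow x (1 - x) b
  rw [show x + (1 - x) = 1 by ring, one_pow, hset, Finset.sum_insert (by simp),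
    Finset.sum_insert (by simp)] at hbin
  simp only [pow_zero, Nat.sub_zero, Nat.choose_zero_right, Nat.cast_one, mul_one, one_mul,
    pow_one, Nat.choose_one_right] at hbin
  have h2 : x ^ 2 * gfun b x = ∑ k ∈ Finset.Icc 2 b, x ^ k * (1 - x) ^ (b - k) * (b.choose k : ℝ) := by
    rw [gfun, Finset.mul_sum]
    refine Finset.sum_congr rfl fun k hk => ?_
    have hk2 : 2 ≤ k := (Finset.mem_Icc.mp hk).1
    have : x ^ k = x ^ 2 * x ^ (k - 2) := by
      rw [← pow_add]; congr 1; omega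
    rw [this]; ring
  rw [h2]
  linarith [hbin]

/-- difference identity on the `h`-level, pure ring fact. -/
lemma hdiff (d : ℕ) (x : ℝ) :
    1 - (1 - x) ^ (d + 2) - ((d : ℝ) + 2) * x * (1 - x) ^ (d + 1)
      = (1 - (1 - x) ^ (d + 1) - ((d : ℝ) + 1) * x * (1 - x) ^ d)
        + ((d : ℝ) + 1) * x ^ 2 * (1 - x) ^ d := by
  ring

lemma sq_mul_gfun_succ {b : ℕ} (hb : 2 ≤ b) (x : ℝ) :
    x ^ 2 * gfun (b + 1) x = x ^ 2 * gfun b x + (b : ℝ) * x ^ 2 * (1 - x) ^ (b - 1) := by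
  obtain ⟨d, rfl⟩ : ∃ d, b = d + 2 := ⟨b - 2, by omega⟩
  rw [sq_mul_gfun (by omega), sq_mul_gfun (by omega)]
  simp only [show d + 2 + 1 - 1 = d + 2 by omega, show d + 2 - 1 = d + 1 by omega]
  push_cast
  ring

/-- key: `b(b-1)(1-x)^{b-1} ≤ 2 g_b(x)` on `[0,1]`. -/
lemma key2 {b : ℕ} (hb : 2 ≤ b) {x : ℝ} (hx : x ∈ Set.Icc (0:ℝ) 1) :
    (b : ℝ) * ((b : ℝ) - 1) * (1 - x) ^ (b - 1) ≤ 2 * gfun b x := by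
  obtain ⟨h0, h1⟩ := hx
  have h1' : (0:ℝ) ≤ 1 - x := by linarith
  have hterm : (b.choose 2 : ℝ) * (x ^ (2 - 2) * (1 - x) ^ (b - 2)) ≤ gfun b x := by
    refine Finset.single_le_sum (f := fun k => (b.choose k : ℝ) * (x ^ (k - 2) * (1 - x) ^ (b - k)))
      (fun k _ => ?_) (Finset.mem_Icc.mpr ⟨le_refl 2, hb⟩)
    positivity
  simp only [show 2 - 2 = 0 by omega, pow_zero, one_mul] at hterm
  have hpow : (1 - x) ^ (b - 1) ≤ (1 - x) ^ (b - 2) :=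
    pow_le_pow_of_le_one h1' (by linarith) (by omega)
  have hch : ((b.choose 2 : ℝ)) * 2 = (b : ℝ) * ((b : ℝ) - 1) := by
    obtain ⟨d, rfl⟩ : ∃ d, b = d + 2 := ⟨b - 2, by omega⟩
    have hdvd : 2 ∣ (d + 2) * (d + 1) := by
      rw [mul_comm]; exact (Nat.even_mul_succ_self (d + 1)).two_dvd
    have hn : (d + 2).choose 2 * 2 = (d + 2) * (d + 1) := by
      rw [Nat.choose_two_right, show d + 2 - 1 = d + 1 by omega, Nat.div_mul_cancel hdvd]
    have : ((d + 2).choose 2 * 2 : ℝ) = ((d + 2) * (d + 1) : ℕ) := by exact_mod_cast hn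
    push_cast at this ⊢
    linarith [this]
  have hchnn : (0:ℝ) ≤ (b.choose 2 : ℝ) := by positivity
  calc (b : ℝ) * ((b : ℝ) - 1) * (1 - x) ^ (b - 1)
      = (b.choose 2 : ℝ) * 2 * (1 - x) ^ (b - 1) := by rw [hch]
    _ ≤ (b.choose 2 : ℝ) * 2 * (1 - x) ^ (b - 2) := by
        apply mul_le_mul_of_nonneg_left hpow (by positivity)
    _ = 2 * ((b.choose 2 : ℝ) * (1 - x) ^ (b - 2)) := by ring
    _ ≤ 2 * gfun b x := by linarith [hterm]

lemma gfun_succ {b : ℕ} (hb : 2 ≤ b) {x : ℝ} (hx0 : x ≠ 0) :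
    gfun (b + 1) x = gfun b x + (b : ℝ) * (1 - x) ^ (b - 1) := by
  have hx2 : (0:ℝ) < x ^ 2 := by positivity
  have h := sq_mul_gfun_succ hb x
  have : x ^ 2 * gfun (b + 1) x = x ^ 2 * (gfun b x + (b : ℝ) * (1 - x) ^ (b - 1)) := by
    rw [h]; ring
  exact mul_left_cancel₀ (ne_of_gt hx2) this

lemma gfun_mono {a c : ℕ} (ha : 2 ≤ a) (hac : a ≤ c) {x : ℝ}
    (hx : x ∈ Set.Icc (0:ℝ) 1) (hx0 : x ≠ 0) : gfun a x ≤ gfun c x := by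
  induction c with
  | zero => omega
  | succ c ih =>
    rcases Nat.lt_or_ge a (c + 1) with h | h
    · have hc : 2 ≤ c := by omega
      have := ih (by omega)
      rw [gfun_succ hc hx0]
      have h1' : (0:ℝ) ≤ 1 - x := by linarith [hx.2]
      have : (0:ℝ) ≤ (c : ℝ) * (1 - x) ^ (c - 1) := by positivity
      linarith [ih (by omega)]
    · have : a = c + 1 := by omega
      rw [this]

lemma gfun_ratio {a c : ℕ} (ha : 2 ≤ a) (hac : a ≤ c) {x : ℝ}
    (hx : x ∈ Set.Icc (0:ℝ) 1) (hx0 : x ≠ 0) :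
    (a : ℝ) * ((a : ℝ) - 1) * gfun c x ≤ (c : ℝ) * ((c : ℝ) - 1) * gfun a x := by
  induction c with
  | zero => omega
  | succ c ih =>
    rcases Nat.lt_or_ge a (c + 1) with h | h
    · have hc : 2 ≤ c := by omega
      have IH := ih (by omega)
      have hA : (0:ℝ) ≤ (a : ℝ) * ((a : ℝ) - 1) := by
        have : (1:ℝ) ≤ (a:ℝ) := by exact_mod_cast (by omega : 1 ≤ a)
        nlinarith
      have hk := key2 hc hx
      have hsucc := gfun_succ hc hx0
      have hcm1 : (1:ℝ) ≤ (c : ℝ) := by exact_mod_cast (by omega : 1 ≤ c)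
      have hga : 0 ≤ gfun a x := gfun_nonneg hx
      have hgc : 0 ≤ gfun c x := gfun_nonneg hx
      -- (c-1) * gfun (c+1) ≤ (c+1) * gfun c
      have step : ((c:ℝ) - 1) * gfun (c + 1) x ≤ ((c:ℝ) + 1) * gfun c x := by
        rw [hsucc]; nlinarith [hk]
      have hc2 : (2:ℝ) ≤ (c : ℝ) := by exact_mod_cast hc
      push_cast
      -- goal: a(a-1) * gfun (c+1) ≤ (c+1) c * gfun a
      nlinarith [mul_le_mul_of_nonneg_left step hA,
        mul_le_mul_of_nonneg_left IH (show (0:ℝ) ≤ (c:ℝ) + 1 by linarith),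
        gfun_nonneg (b := c + 1) hx]
    · have : a = c + 1 := by omega
      subst this
      exact le_refl _

lemma lamB_eq_integral (μ : Measure ℝ) [IsFiniteMeasure μ] (b : ℕ) :
    lamB μ b = ∫ x in Set.Icc (0:ℝ) 1, gfun b x ∂μ := by
  rw [lamB]
  have h1 : ∀ k : ℕ, (b.choose k : ℝ) * lamBK μ b k
      = ∫ x in Set.Icc (0:ℝ) 1, (b.choose k : ℝ) * (x ^ (k - 2) * (1 - x) ^ (b - k)) ∂μ := by
    intro k
    rw [lamBK, ← integral_const_mul]
  simp_rw [h1]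
  rw [← integral_finset_sum]
  · rfl
  · intro k _
    exact Continuous.integrableOn_Icc (by fun_prop)

lemma gfun_integrableOn (μ : Measure ℝ) [IsFiniteMeasure μ] (b : ℕ) :
    IntegrableOn (gfun b) (Set.Icc (0:ℝ) 1) μ :=
  Continuous.integrableOn_Icc (gfun_continuous b)

lemma lamB_nonneg (μ : Measure ℝ) [IsFiniteMeasure μ] (b : ℕ) : 0 ≤ lamB μ b := by
  rw [lamB_eq_integral]
  exact setIntegral_nonneg measurableSet_Icc fun x hx => gfun_nonneg hx

lemma ae_facts (μ : Measure ℝ) (h0 : μ {0} = 0) :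
    ∀ᵐ x ∂(μ.restrict (Set.Icc (0:ℝ) 1)), x ∈ Set.Icc (0:ℝ) 1 ∧ x ≠ 0 := by
  have ha : ∀ᵐ x ∂μ, x ≠ 0 := by
    rw [ae_iff]
    convert h0 using 2
    ext x; simp
  have hb := ae_restrict_mem (μ := μ) (measurableSet_Icc (a := (0:ℝ)) (b := 1))
  filter_upwards [hb, ae_restrict_of_ae ha] with x h1 h2
  exact ⟨h1, h2⟩

lemma lamB_mono (μ : Measure ℝ) [IsFiniteMeasure μ] (h0 : μ {0} = 0)
    {a c : ℕ} (ha : 2 ≤ a) (hac : a ≤ c) : lamB μ a ≤ lamB μ c := by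
  rw [lamB_eq_integral, lamB_eq_integral]
  refine integral_mono_ae (gfun_integrableOn μ a) (gfun_integrableOn μ c) ?_
  filter_upwards [ae_facts μ h0] with x ⟨hx, hx0⟩
  exact gfun_mono ha hac hx hx0

lemma lamB_ratio (μ : Measure ℝ) [IsFiniteMeasure μ] (h0 : μ {0} = 0)
    {a c : ℕ} (ha : 2 ≤ a) (hac : a ≤ c) :
    (a : ℝ) * ((a : ℝ) - 1) * lamB μ c ≤ (c : ℝ) * ((c : ℝ) - 1) * lamB μ a := by
  rw [lamB_eq_integral, lamB_eq_integral, ← integral_const_mul, ← integral_const_mul]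
  refine integral_mono_ae ((gfun_integrableOn μ c).const_mul _)
    ((gfun_integrableOn μ a).const_mul _) ?_
  filter_upwards [ae_facts μ h0] with x ⟨hx, hx0⟩
  exact gfun_ratio ha hac hx hx0

lemma lamB_eq_zero (μ : Measure ℝ) {b : ℕ} (hb : b < 2) : lamB μ b = 0 := by
  rw [lamB, Finset.Icc_eq_empty (by omega), Finset.sum_empty]

theorem lamB_spatial_estimate :
    ∃ ρ : ℝ, 1 ≤ ρ ∧
      ∀ (μ : Measure ℝ), IsFiniteMeasure μ → μ {0} = 0 → μ {1} = 0 →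
        μ ((Set.Icc (0:ℝ) 1)ᶜ) = 0 → 0 < μ (Set.Icc (0:ℝ) 1) →
        ∀ (υ : ℕ), 1 ≤ υ → ∀ b : Fin υ → ℕ, υ < ∑ i, b i →
          lamB μ ⌈((∑ i, b i : ℕ) : ℝ) / (υ : ℝ)⌉₊ ≤ (∑ i, lamB μ (b i)) ∧
            (∑ i, lamB μ (b i))
              ≤ (υ : ℝ) ^ ((1 : ℝ) + ρ) * lamB μ ⌈((∑ i, b i : ℕ) : ℝ) / (υ : ℝ)⌉₊ := by
  refine ⟨3, by norm_num, ?_⟩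
  intro μ hfin h0 h1 hcomp hpos υ hυ b hsum
  haveI := hfin
  set S : ℕ := ∑ i, b i with hS
  set m : ℕ := ⌈(S : ℝ) / (υ : ℝ)⌉₊ with hm
  have hυpos : (0:ℝ) < (υ : ℝ) := by exact_mod_cast hυ
  have hm2 : 2 ≤ m := by
    have : 1 < m := by
      rw [hm, Nat.lt_ceil]
      rw [lt_div_iff₀ hυpos]
      push_cast
      rw [one_mul]
      exact_mod_cast hsum
    omega
  have hmS : m ≤ S := by
    rw [hm, Nat.ceil_le]
    calc (S:ℝ) / υ ≤ (S:ℝ) / 1 := by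
          apply div_le_div_of_nonneg_left (by positivity) one_pos
          exact_mod_cast hυ
      _ = (S:ℝ) := by rw [div_one]
  have hSum : S ≤ υ * m := by
    have h := Nat.le_ceil ((S : ℝ) / (υ : ℝ))
    rw [← hm, div_le_iff₀ hυpos] at h
    exact_mod_cast le_of_le_of_eq h (mul_comm _ _)
  -- each lamB is nonneg
  have hnn : ∀ i : Fin υ, 0 ≤ lamB μ (b i) := fun i => lamB_nonneg μ (b i)
  -- lower bound
  have hlow : lamB μ m ≤ ∑ i, lamB μ (b i) := by
    obtain ⟨j, hj⟩ : ∃ j : Fin υ, m ≤ b j := by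
      by_contra hcon
      push_neg at hcon
      have : S ≤ υ * (m - 1) := by
        calc S = ∑ i, b i := hS
          _ ≤ ∑ _i : Fin υ, (m - 1) := Finset.sum_le_sum fun i _ => by
              have := hcon i; omega
          _ = υ * (m - 1) := by
            rw [Finset.sum_const, Finset.card_univ, Fintype.card_fin, smul_eq_mul]
      have h2 : υ * (m - 1) < S := by
        have hlt0 : m - 1 < ⌈(S : ℝ) / (υ:ℝ)⌉₊ := by rw [← hm]; omega
        have hlt := Nat.lt_ceil.mp hlt0
        rw [lt_div_iff₀ hυpos] at hlt
        have : (m - 1) * υ < S := by exact_mod_cast hlt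
        rwa [Nat.mul_comm]
      omega
    calc lamB μ m ≤ lamB μ (b j) := lamB_mono μ h0 hm2 hj
      _ ≤ ∑ i, lamB μ (b i) := Finset.single_le_sum (fun i _ => hnn i) (Finset.mem_univ j)
  refine ⟨hlow, ?_⟩
  -- upper bound
  have hbiS : ∀ i : Fin υ, b i ≤ S := fun i =>
    Finset.single_le_sum (f := b) (fun _ _ => Nat.zero_le _) (Finset.mem_univ i)
  have heach : ∀ i : Fin υ, lamB μ (b i) ≤ lamB μ S := by
    intro i
    rcases Nat.lt_or_ge (b i) 2 with h | h
    · rw [lamB_eq_zero μ h]; exact lamB_nonneg μ S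
    · exact lamB_mono μ h0 h (hbiS i)
  have hsum_le : ∑ i, lamB μ (b i) ≤ (υ : ℝ) * lamB μ S := by
    calc ∑ i, lamB μ (b i) ≤ ∑ _i : Fin υ, lamB μ S := Finset.sum_le_sum fun i _ => heach i
      _ = (υ : ℝ) * lamB μ S := by
        rw [Finset.sum_const, Finset.card_univ, Fintype.card_fin, nsmul_eq_mul]
  have hratio := lamB_ratio μ h0 hm2 hmS
  have hLSnn : 0 ≤ lamB μ S := lamB_nonneg μ S
  have hLMnn : 0 ≤ lamB μ m := lamB_nonneg μ m
  have hrpow : (υ : ℝ) ^ ((1:ℝ) + 3) = (υ : ℝ) ^ (4 : ℕ) := by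
    rw [show (1:ℝ) + 3 = ((4:ℕ) : ℝ) by norm_num, Real.rpow_natCast]
  rw [hrpow]
  -- real versions of arithmetic facts
  have hM2 : (2:ℝ) ≤ (m : ℝ) := by exact_mod_cast hm2
  have hMS : (m:ℝ) ≤ (S:ℝ) := by exact_mod_cast hmS
  have hSUM : (S:ℝ) ≤ (υ:ℝ) * (m:ℝ) := by exact_mod_cast hSum
  have hU1 : (1:ℝ) ≤ (υ:ℝ) := by exact_mod_cast hυ
  have hkey : (υ:ℝ) * lamB μ S ≤ (υ:ℝ) ^ (4:ℕ) * lamB μ m := by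
    rcases eq_or_lt_of_le hυ with hυ1 | hυ2
    · -- υ = 1 : then S = m
      have hU : (υ:ℝ) = 1 := by exact_mod_cast hυ1.symm
      have hυe : υ = 1 := hυ1.symm
      have hS1 : S ≤ 1 * m := hυe ▸ hSum
      have hSm : S = m := le_antisymm (by omega) hmS
      rw [hU, hSm]; norm_num
    · have hU2 : (2:ℝ) ≤ (υ:ℝ) := by exact_mod_cast hυ2
      -- m(m-1) * LS ≤ S(S-1) * LM ≤ υ²m² LM ; υ³m² ≤ υ⁴ m(m-1)
      have hMM : (0:ℝ) < (m:ℝ) * ((m:ℝ) - 1) := by nlinarith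
      rw [← mul_le_mul_iff_right₀ hMM]
      have e1 : (m:ℝ) * ((m:ℝ)-1) * ((υ:ℝ) * lamB μ S)
          = (υ:ℝ) * ((m:ℝ) * ((m:ℝ)-1) * lamB μ S) := by ring
      have e2 : (υ:ℝ) * ((m:ℝ) * ((m:ℝ)-1) * lamB μ S)
          ≤ (υ:ℝ) * ((S:ℝ) * ((S:ℝ)-1) * lamB μ m) :=
        mul_le_mul_of_nonneg_left hratio (by linarith)
      have e3 : (S:ℝ) * ((S:ℝ)-1) ≤ (υ:ℝ)^2 * (m:ℝ)^2 := by nlinarith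
      have e4 : (υ:ℝ) * ((S:ℝ) * ((S:ℝ)-1) * lamB μ m)
          ≤ (υ:ℝ) * ((υ:ℝ)^2 * (m:ℝ)^2 * lamB μ m) := by
        apply mul_le_mul_of_nonneg_left _ (by linarith)
        exact mul_le_mul_of_nonneg_right e3 hLMnn
      have e5 : (υ:ℝ) * ((υ:ℝ)^2 * (m:ℝ)^2 * lamB μ m)
          ≤ (m:ℝ) * ((m:ℝ)-1) * ((υ:ℝ)^(4:ℕ) * lamB μ m) := by
        have hmu : (m:ℝ) ≤ (υ:ℝ) * ((m:ℝ) - 1) := by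
          have h2m := mul_le_mul_of_nonneg_right hU2 (show (0:ℝ) ≤ (m:ℝ) - 1 by linarith)
          linarith
        have hpos3 : (0:ℝ) ≤ (υ:ℝ)^3 * (m:ℝ) := by positivity
        have hstep := mul_le_mul_of_nonneg_left hmu hpos3
        have hthis : (υ:ℝ)^3 * (m:ℝ)^2 ≤ (υ:ℝ)^4 * ((m:ℝ) * ((m:ℝ)-1)) := by
          calc (υ:ℝ)^3 * (m:ℝ)^2 = (υ:ℝ)^3 * (m:ℝ) * (m:ℝ) := by ring
            _ ≤ (υ:ℝ)^3 * (m:ℝ) * ((υ:ℝ) * ((m:ℝ)-1)) := hstep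
            _ = (υ:ℝ)^4 * ((m:ℝ) * ((m:ℝ)-1)) := by ring
        calc (υ:ℝ) * ((υ:ℝ)^2 * (m:ℝ)^2 * lamB μ m)
            = ((υ:ℝ)^3 * (m:ℝ)^2) * lamB μ m := by ring
          _ ≤ ((υ:ℝ)^4 * ((m:ℝ) * ((m:ℝ)-1))) * lamB μ m :=
              mul_le_mul_of_nonneg_right hthis hLMnn
          _ = (m:ℝ) * ((m:ℝ)-1) * ((υ:ℝ)^(4:ℕ) * lamB μ m) := by ring
      have e2' : (m:ℝ) * ((m:ℝ)-1) * ((υ:ℝ) * lamB μ S)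
          ≤ (υ:ℝ) * ((S:ℝ) * ((S:ℝ)-1) * lamB μ m) := by rw [e1]; exact e2
      linarith [e2', e4, e5]
  linarith [hsum_le, hkey]
end

section
/- Fix an integer υ ≥ 1 and let m, n be positive integers with n ≥ 2 and nυ ≤ m < (n+1)υ. Then for every integer k ≥ 1 and positive integers j_1, …, j_k satisfying Σ_{i=1}^{k-1} j_i < m − 2υ and m − 2υ ≤ Σ_{i=1}^k j_i ≤ m − 1, one has Σ_{i=1}^k j_i / γ_{⌊(m − Σ_{ℓ=1}^{i-1} j_ℓ)/υ⌋} ≤ (m − nυ)/γ_n + Σ_{b=2}^{n-1} υ/γ_b + 2υ/γ_2. -/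
open MeasureTheory Finset Filter

lemma sumA (b : ℕ) (x : ℝ) :
    ∑ k ∈ Finset.range (b+1), (b.choose k : ℝ) * (x^k * (1-x)^(b-k)) = 1 := by
  have h := add_pow x (1-x) b
  rw [show x + (1-x) = 1 by ring, one_pow] at h
  conv_rhs => rw [h]
  exact Finset.sum_congr rfl fun k _ => by ring

lemma sumB (b : ℕ) (x : ℝ) :
    ∑ k ∈ Finset.range (b+1), (k : ℝ) * (b.choose k : ℝ) * (x^k * (1-x)^(b-k)) = b * x := by
  cases b with
  | zero => simp
  | succ b =>
    rw [Finset.sum_range_succ']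
    simp only [Nat.cast_zero, zero_mul, add_zero]
    have e : ∀ i ∈ Finset.range (b+1),
        ((i+1 : ℕ):ℝ) * (((b+1).choose (i+1)) : ℝ) * (x^(i+1) * (1-x)^(b+1-(i+1)))
        = ((b:ℝ)+1) * x * ((b.choose i : ℝ) * (x^i * (1-x)^(b-i))) := by
      intro i _
      have h : ((b+1) * b.choose i : ℕ) = ((b+1).choose (i+1) * (i+1) : ℕ) :=
        Nat.add_one_mul_choose_eq b i
      have h' : ((b:ℝ)+1) * (b.choose i:ℝ) = (((b+1).choose (i+1)):ℝ) * ((i:ℝ)+1) := by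
        exact_mod_cast congrArg (Nat.cast (R := ℝ)) h
      have hp : b+1-(i+1) = b-i := by omega
      rw [hp]
      push_cast
      linear_combination (-(x^i * (1-x)^(b-i) * x)) * h'
    rw [Finset.sum_congr rfl e, ← Finset.mul_sum, sumA b x]
    push_cast
    ring

lemma keyId (b : ℕ) (hb : 2 ≤ b) (x : ℝ) :
    x^2 * (∑ k ∈ Finset.Icc 2 b, (b.choose k : ℝ) * ((k:ℝ) - 1) * (x^(k-2) * (1-x)^(b-k)))
      = b * x - 1 + (1-x)^b := by
  have h1 : x^2 * (∑ k ∈ Finset.Icc 2 b, (b.choose k : ℝ) * ((k:ℝ) - 1) * (x^(k-2) * (1-x)^(b-k)))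
      = ∑ k ∈ Finset.Icc 2 b, (b.choose k : ℝ) * ((k:ℝ) - 1) * (x^k * (1-x)^(b-k)) := by
    rw [Finset.mul_sum]
    refine Finset.sum_congr rfl fun k hk => ?_
    simp only [Finset.mem_Icc] at hk
    have hx : x^2 * x^(k-2) = x^k := by rw [← pow_add]; congr 1; omega
    calc x^2 * ((b.choose k : ℝ) * ((k:ℝ) - 1) * (x^(k-2) * (1-x)^(b-k)))
        = (b.choose k : ℝ) * ((k:ℝ) - 1) * ((x^2 * x^(k-2)) * (1-x)^(b-k)) := by ring
      _ = _ := by rw [hx]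
  rw [h1]
  -- extend to range (b+1)
  have h2 : ∑ k ∈ Finset.range (b+1), (b.choose k : ℝ) * ((k:ℝ) - 1) * (x^k * (1-x)^(b-k))
      = (-(1-x)^b) + ∑ k ∈ Finset.Icc 2 b, (b.choose k : ℝ) * ((k:ℝ) - 1) * (x^k * (1-x)^(b-k)) := by
    rw [Finset.range_eq_Ico, ← Finset.sum_Ico_consecutive _ (show 0 ≤ 2 by omega) (show 2 ≤ b+1 by omega),
      Finset.Ico_add_one_right_eq_Icc]
    congr 1
    rw [show (Finset.Ico 0 2 : Finset ℕ) = {0,1} by decide]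
    rw [Finset.sum_insert (by decide), Finset.sum_singleton]
    norm_num
  have h3 : ∑ k ∈ Finset.range (b+1), (b.choose k : ℝ) * ((k:ℝ) - 1) * (x^k * (1-x)^(b-k))
      = b * x - 1 := by
    have : ∀ k ∈ Finset.range (b+1), (b.choose k : ℝ) * ((k:ℝ) - 1) * (x^k * (1-x)^(b-k))
        = (k : ℝ) * (b.choose k : ℝ) * (x^k * (1-x)^(b-k)) - (b.choose k : ℝ) * (x^k * (1-x)^(b-k)) := by
      intro k _; ring
    rw [Finset.sum_congr rfl this, Finset.sum_sub_distrib, sumA, sumB]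
  have := h2.symm.trans h3
  linarith [this]

set_option linter.unusedSectionVars false

variable {μ : Measure ℝ} [IsFiniteMeasure μ]

lemma integrableAux (p q : ℕ) :
    IntegrableOn (fun x : ℝ => x^p * (1-x)^q) (Set.Icc 0 1) μ :=
  (Continuous.mul (continuous_pow p)
    ((continuous_const.sub continuous_id).pow q)).integrableOn_Icc

lemma gamB_eq (b : ℕ) :
    gamB μ b = ∫ x in Set.Icc (0:ℝ) 1,
      (∑ k ∈ Finset.Icc 2 b, (b.choose k : ℝ) * ((k:ℝ)-1) * (x^(k-2) * (1-x)^(b-k))) ∂μ := by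
  rw [MeasureTheory.integral_finset_sum _
    (fun k _ => ((integrableAux (k-2) (b-k)).const_mul ((b.choose k : ℝ) * ((k:ℝ)-1))))]
  unfold gamB lamBK
  exact Finset.sum_congr rfl fun k _ => (MeasureTheory.integral_const_mul _ _).symm

lemma gamB_two : gamB μ 2 = (μ (Set.Icc (0:ℝ) 1)).toReal := by
  unfold gamB lamBK
  rw [Finset.Icc_self, Finset.sum_singleton]
  norm_num
  rfl

lemma gamB_two_pos (hpos : 0 < μ (Set.Icc (0:ℝ) 1)) : 0 < gamB μ 2 := by
  rw [gamB_two]; exact ENNReal.toReal_pos hpos.ne' (measure_ne_top μ _)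

lemma gamB_mono_succ (h0 : μ {(0:ℝ)} = 0) (b : ℕ) (hb : 2 ≤ b) :
    gamB μ b ≤ gamB μ (b+1) := by
  rw [gamB_eq, gamB_eq]
  have hae : ∀ᵐ x ∂μ, x ∈ ({(0:ℝ)} : Set ℝ)ᶜ := MeasureTheory.compl_mem_ae_iff.mpr h0
  refine MeasureTheory.setIntegral_mono_on_ae
    (MeasureTheory.integrable_finset_sum _
      (fun k _ => ((integrableAux (k-2) (b-k)).const_mul _)))
    (MeasureTheory.integrable_finset_sum _
      (fun k _ => ((integrableAux (k-2) (b+1-k)).const_mul _)))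
    measurableSet_Icc ?_
  filter_upwards [hae] with x hx0 hxI
  have hx0' : x ≠ 0 := hx0
  have hxa : (0:ℝ) ≤ x := hxI.1
  have hxb : x ≤ 1 := hxI.2
  have k1 := keyId b hb x
  have k2 := keyId (b+1) (by omega) x
  have hpow : (1-x)^b ≤ 1 := pow_le_one₀ (by linarith) (by linarith)
  have hx2 : 0 < x^2 := by positivity
  set A := ∑ k ∈ Finset.Icc 2 b, (b.choose k : ℝ) * ((k:ℝ)-1) * (x^(k-2) * (1-x)^(b-k)) with hA
  set B := ∑ k ∈ Finset.Icc 2 (b+1), ((b+1).choose k : ℝ) * ((k:ℝ)-1) * (x^(k-2) * (1-x)^(b+1-k)) with hB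
  have hd : x^2 * (B - A) = x * (1 - (1-x)^b) := by
    push_cast at k2
    linear_combination k2 - k1 + pow_succ (1-x) b
  nlinarith [mul_nonneg hxa (sub_nonneg.mpr hpow)]

lemma natAux1 {P s : ℕ} (h1 : 1 ≤ P) (h : P - 1 < s) : P ≤ s := by omega

lemma sumC' (γ : ℕ → ℝ) (hpos : ∀ b, 2 ≤ b → 0 < γ b) (υ : ℕ) (hυ : 1 ≤ υ) :
    ∀ n, 2 ≤ n → ∀ m, n*υ ≤ m → m < (n+1)*υ →
    ∑ s ∈ Finset.Ioc (2*υ-1) m, 1/γ (s/υ)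
      ≤ ((m:ℝ) - n*υ + 1)/γ n + ∑ b ∈ Finset.Icc 2 (n-1), (υ:ℝ)/γ b := by
  intro n hn
  induction n, hn using Nat.le_induction with
  | base =>
    intro m hm1 hm2
    have hc : ∀ s ∈ Finset.Ioc (2*υ-1) m, 1/γ (s/υ) = 1/γ 2 := by
      intro s hs
      simp only [Finset.mem_Ioc] at hs
      rw [Nat.div_eq_of_lt_le (show 2*υ ≤ s by omega)
        (show s < (2+1)*υ from lt_of_le_of_lt hs.2 hm2)]
    rw [Finset.sum_congr rfl hc, Finset.sum_const, Nat.card_Ioc, nsmul_eq_mul]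
    have h2m : 2*υ ≤ m := hm1
    have hcast : ((m - (2*υ-1) : ℕ) : ℝ) = (m:ℝ) - 2*υ + 1 := by
      rw [Nat.cast_sub (by omega), Nat.cast_sub (by omega)]
      push_cast; ring
    rw [hcast]
    rw [show (2:ℕ)-1 = 1 from rfl, Finset.Icc_eq_empty (by omega), Finset.sum_empty, add_zero]
    apply le_of_eq
    push_cast
    ring
  | succ n hn ih =>
    intro m hm1 hm2
    have hP1 : 1 ≤ (n+1)*υ := Nat.one_le_iff_ne_zero.mpr (by positivity)
    have hA : 2*υ ≤ (n+1)*υ := Nat.mul_le_mul_right _ (by omega)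
    have hsplit := Finset.sum_Ioc_consecutive (fun s => 1/γ (s/υ))
      (Nat.sub_le_sub_right hA 1) (le_trans (Nat.sub_le _ _) hm1)
    rw [← hsplit]
    -- first chunk
    have hm1' : n*υ ≤ (n+1)*υ - 1 := by
      have h : n*υ < (n+1)*υ := by
        have : n*υ + υ = (n+1)*υ := by ring
        omega
      omega
    have hm2' : (n+1)*υ - 1 < (n+1)*υ := Nat.sub_lt (by omega) one_pos
    have hchunk1 := ih ((n+1)*υ - 1) hm1' hm2'
    have e1 : ((((n+1)*υ-1 : ℕ)):ℝ) - n*υ + 1 = υ := by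
      rw [Nat.cast_sub hP1]; push_cast; ring
    rw [e1] at hchunk1
    -- second chunk
    have hc2 : ∀ s ∈ Finset.Ioc ((n+1)*υ-1) m, 1/γ (s/υ) = 1/γ (n+1) := by
      intro s hs
      simp only [Finset.mem_Ioc] at hs
      rw [Nat.div_eq_of_lt_le (natAux1 hP1 hs.1) (lt_of_le_of_lt hs.2 hm2)]
    have hchunk2 : ∑ s ∈ Finset.Ioc ((n+1)*υ-1) m, 1/γ (s/υ)
        = ((m:ℝ) - ((n:ℝ)+1)*υ + 1) / γ (n+1) := by
      rw [Finset.sum_congr rfl hc2, Finset.sum_const, Nat.card_Ioc, nsmul_eq_mul]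
      rw [Nat.cast_sub (le_trans (Nat.sub_le _ _) hm1), Nat.cast_sub hP1]
      push_cast; ring
    -- RHS reorganization
    have hIcc : ∑ b ∈ Finset.Icc 2 (n+1-1), (υ:ℝ)/γ b
        = ∑ b ∈ Finset.Icc 2 (n-1), (υ:ℝ)/γ b + (υ:ℝ)/γ n := by
      rw [show n+1-1 = (n-1)+1 by omega, Finset.sum_Icc_succ_top (by omega),
        show (n-1)+1 = n by omega]
    rw [hchunk2, hIcc]
    have : (υ:ℝ)/γ n = (υ:ℝ) * (1/γ n) := by rw [div_eq_mul_one_div]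
    push_cast at hchunk1 ⊢
    have h1 : ((υ:ℝ))/γ n + ∑ b ∈ Finset.Icc 2 (n-1), (υ:ℝ)/γ b ≥
        ∑ s ∈ Finset.Ioc (2*υ-1) ((n+1)*υ-1), 1/γ (s/υ) := hchunk1
    linarith [h1]

theorem gamB_deterministic_sum_bound (μ : Measure ℝ) [IsFiniteMeasure μ]
    (h0 : μ {0} = 0) (h1 : μ {1} = 0)
    (hsupp : μ ((Set.Icc (0:ℝ) 1)ᶜ) = 0) (hpos : 0 < μ (Set.Icc (0:ℝ) 1))
    (υ m n : ℕ) (hυ : 1 ≤ υ) (hn : 2 ≤ n)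
    (hm1 : n * υ ≤ m) (hm2 : m < (n + 1) * υ)
    (k : ℕ) (hk : 1 ≤ k) (j : ℕ → ℕ) (hj : ∀ i, i < k → 1 ≤ j i)
    (hsum1 : ∑ i ∈ Finset.range (k - 1), j i < m - 2 * υ)
    (hsum2 : m - 2 * υ ≤ ∑ i ∈ Finset.range k, j i)
    (hsum3 : ∑ i ∈ Finset.range k, j i ≤ m - 1) :
    ∑ i ∈ Finset.range k,
        (j i : ℝ) / gamB μ ((m - ∑ ℓ ∈ Finset.range i, j ℓ) / υ)
      ≤ ((m : ℝ) - (n : ℝ) * (υ : ℝ)) / gamB μ n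
        + (∑ b ∈ Finset.Icc 2 (n - 1), (υ : ℝ) / gamB μ b)
        + 2 * (υ : ℝ) / gamB μ 2 := by
  set γ : ℕ → ℝ := gamB μ with hγ
  -- basic facts about γ
  have hγmono : ∀ a b, 2 ≤ a → a ≤ b → γ a ≤ γ b := by
    intro a b ha hab
    induction b, hab using Nat.le_induction with
    | base => exact le_rfl
    | succ b hab ih => exact le_trans ih (gamB_mono_succ h0 b (le_trans ha hab))
  have hγpos : ∀ b, 2 ≤ b → 0 < γ b := fun b hb =>
    lt_of_lt_of_le (gamB_two_pos hpos) (hγmono 2 b le_rfl hb)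
  -- notation
  set S : ℕ → ℕ := fun i => ∑ ℓ ∈ Finset.range i, j ℓ with hS
  set g : ℕ → ℝ := fun t => 1/γ (max 2 ((m-t)/υ)) with hg
  have hgpos : ∀ t, 0 < g t := fun t =>
    one_div_pos.mpr (hγpos _ (le_max_left _ _))
  have hm2υ : 2*υ < m := by
    have := hsum1; omega
  have hSk1 : ∀ i, i < k → S i < m - 2*υ := by
    intro i hi
    have hsub : S i ≤ S (k-1) :=
      Finset.sum_le_sum_of_subset (Finset.range_subset_range.mpr (by omega))
    exact lt_of_le_of_lt hsub hsum1
  -- step 1 : compare with per-unit sum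
  have claim : ∀ K, K ≤ k →
      ∑ i ∈ Finset.range K, (j i : ℝ)/γ ((m - S i)/υ) ≤ ∑ t ∈ Finset.range (S K), g t := by
    intro K
    induction K with
    | zero => intro _; simp [hS]
    | succ K ihK =>
      intro hK1
      have hK : K ≤ k := by omega
      have hSsucc : S (K+1) = S K + j K := Finset.sum_range_succ j K
      have hle : S K ≤ S (K+1) := by omega
      rw [Finset.sum_range_succ, ← Finset.sum_range_add_sum_Ico g hle]
      refine add_le_add (ihK hK) ?_
      -- the K-th term
      have hSK := hSk1 K (by omega)
      have hbK2 : 2 ≤ (m - S K)/υ := (Nat.le_div_iff_mul_le (by omega)).mpr (by omega)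
      have hper : ∀ t ∈ Finset.Ico (S K) (S (K+1)), 1/γ ((m - S K)/υ) ≤ g t := by
        intro t ht
        simp only [Finset.mem_Ico] at ht
        have hdiv : (m-t)/υ ≤ (m - S K)/υ :=
          Nat.div_le_div_right (Nat.sub_le_sub_left ht.1 m)
        have hmax : max 2 ((m-t)/υ) ≤ (m - S K)/υ := max_le hbK2 hdiv
        exact one_div_le_one_div_of_le (hγpos _ (le_max_left _ _)) (hγmono _ _ (le_max_left _ _) hmax)
      have hcard := Finset.card_nsmul_le_sum (Finset.Ico (S K) (S (K+1))) g
        (1/γ ((m - S K)/υ)) hper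
      rw [Nat.card_Ico] at hcard
      have hcc : S (K+1) - S K = j K := by omega
      rw [hcc, nsmul_eq_mul] at hcard
      calc (j K : ℝ)/γ ((m - S K)/υ) = (j K : ℝ) * (1/γ ((m - S K)/υ)) := by
            rw [div_eq_mul_one_div]
        _ ≤ _ := hcard
  -- step 2 : extend range
  have step2 : ∑ t ∈ Finset.range (S k), g t ≤ ∑ t ∈ Finset.range (m-1), g t :=
    Finset.sum_le_sum_of_subset_of_nonneg (Finset.range_subset_range.mpr hsum3)
      (fun t _ _ => (hgpos t).le)
  -- step 3 : reindex
  have step3 : ∑ t ∈ Finset.range (m-1), g t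
      = ∑ s ∈ Finset.Ioc 1 m, 1/γ (max 2 (s/υ)) := by
    refine Finset.sum_nbij' (fun t => m - t) (fun s => m - s) ?_ ?_ ?_ ?_ ?_
    · intro t ht; simp only [Finset.mem_range] at ht; simp only [Finset.mem_Ioc]; omega
    · intro s hs; simp only [Finset.mem_Ioc] at hs; simp only [Finset.mem_range]; omega
    · intro t ht; simp only [Finset.mem_range] at ht; omega
    · intro s hs; simp only [Finset.mem_Ioc] at hs; omega
    · intro t _; rfl
  -- step 4 : split at 2υ-1
  have hsplit := Finset.sum_Ioc_consecutive (fun s => 1/γ (max 2 (s/υ)))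
    (show 1 ≤ 2*υ-1 by omega) (show 2*υ-1 ≤ m by omega)
  -- chunk a
  have hca : ∀ s ∈ Finset.Ioc 1 (2*υ-1), 1/γ (max 2 (s/υ)) = 1/γ 2 := by
    intro s hs
    simp only [Finset.mem_Ioc] at hs
    have : s/υ < 2 := (Nat.div_lt_iff_lt_mul (by omega)).mpr (by omega)
    rw [max_eq_left this.le]
  have hchunka : ∑ s ∈ Finset.Ioc 1 (2*υ-1), 1/γ (max 2 (s/υ))
      = (2*(υ:ℝ) - 2) * (1/γ 2) := by
    rw [Finset.sum_congr rfl hca, Finset.sum_const, Nat.card_Ioc, nsmul_eq_mul]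
    congr 1
    rw [Nat.cast_sub (by omega), Nat.cast_sub (by omega)]
    push_cast; ring
  -- chunk b
  have hcb : ∀ s ∈ Finset.Ioc (2*υ-1) m, 1/γ (max 2 (s/υ)) = 1/γ (s/υ) := by
    intro s hs
    simp only [Finset.mem_Ioc] at hs
    have : 2 ≤ s/υ := (Nat.le_div_iff_mul_le (by omega)).mpr (by omega)
    rw [max_eq_right this]
  have hchunkb : ∑ s ∈ Finset.Ioc (2*υ-1) m, 1/γ (max 2 (s/υ))
      ≤ ((m:ℝ) - n*υ + 1)/γ n + ∑ b ∈ Finset.Icc 2 (n-1), (υ:ℝ)/γ b := by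
    rw [Finset.sum_congr rfl hcb]
    exact sumC' γ hγpos υ hυ n hn m hm1 hm2
  -- final arithmetic
  have hγ2 : 0 < γ 2 := hγpos 2 le_rfl
  have hγn2 : γ 2 ≤ γ n := hγmono 2 n le_rfl hn
  have hfin1 : 1/γ n ≤ 1/γ 2 := one_div_le_one_div_of_le hγ2 hγn2
  have hmain : ∑ i ∈ Finset.range k, (j i : ℝ)/γ ((m - S i)/υ)
      ≤ (2*(υ:ℝ) - 2) * (1/γ 2) + (((m:ℝ) - n*υ + 1)/γ n + ∑ b ∈ Finset.Icc 2 (n-1), (υ:ℝ)/γ b) := by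
    calc ∑ i ∈ Finset.range k, (j i : ℝ)/γ ((m - S i)/υ)
        ≤ ∑ t ∈ Finset.range (S k), g t := claim k le_rfl
      _ ≤ ∑ t ∈ Finset.range (m-1), g t := step2
      _ = ∑ s ∈ Finset.Ioc 1 m, 1/γ (max 2 (s/υ)) := step3
      _ = ∑ s ∈ Finset.Ioc 1 (2*υ-1), 1/γ (max 2 (s/υ))
          + ∑ s ∈ Finset.Ioc (2*υ-1) m, 1/γ (max 2 (s/υ)) := hsplit.symm
      _ ≤ _ := by rw [hchunka]; exact add_le_add_right hchunkb _
  have hsplitdiv : ((m:ℝ) - n*υ + 1)/γ n = ((m:ℝ) - n*υ)/γ n + 1/γ n := by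
    rw [← add_div]
  have h2υ : (2*(υ:ℝ) - 2) * (1/γ 2) + 1/γ 2 ≤ 2 * (υ:ℝ) / γ 2 := by
    rw [div_eq_mul_one_div (2*(υ:ℝ)) (γ 2)]
    have hυ1 : (1:ℝ) ≤ υ := by exact_mod_cast hυ
    nlinarith [one_div_pos.mpr hγ2]
  calc ∑ i ∈ Finset.range k, (j i : ℝ)/γ ((m - S i)/υ)
      ≤ (2*(υ:ℝ) - 2) * (1/γ 2) + (((m:ℝ) - n*υ + 1)/γ n + ∑ b ∈ Finset.Icc 2 (n-1), (υ:ℝ)/γ b) := hmain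
    _ ≤ _ := by rw [hsplitdiv]; linarith [hfin1, h2υ]
end
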